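/- Let b_0,…,b_n be real numbers distinct mod π, m, a real with m an integer, and ϑ ∈ {m−n, m−n+2, …, m+n} (same parity as m+n). Then for all z with sin(z−b_k) ≠ 0: sin(mz−a)/∏_{k=0}^n sin(z−b_k) = Σ_{k=0}^n sin(m b_k − a + ϑ(z−b_k)) / [ ∏_{j≠k} sin(b_k−b_j) · sin(z−b_k) ]. -/

import Mathlib

open Finset

lemma sin_eq_exp' (x : ℂ) :
    Complex.sin x = (Complex.exp (x * Complex.I) - Complex.exp (-(x * Complex.I))) / (2 * Complex.I) := by
  rw [Complex.sin]
  have h : (Complex.I:ℂ) ≠ 0 := Complex.I_ne_zero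
  field_simp
  ring_nf
  rw [Complex.I_sq]
  ring

lemma sin_sub_exp (x y : ℂ) :
    Complex.sin (x - y) =
      (Complex.exp (x*Complex.I)^2 - Complex.exp (y*Complex.I)^2) /
        (2 * Complex.I * Complex.exp (x*Complex.I) * Complex.exp (y*Complex.I)) := by
  have hX := Complex.exp_ne_zero (x*Complex.I)
  have hY := Complex.exp_ne_zero (y*Complex.I)
  rw [sin_eq_exp', show (x - y) * Complex.I = x*Complex.I - y*Complex.I by ring, Complex.exp_sub,
    show -(x*Complex.I - y*Complex.I) = y*Complex.I - x*Complex.I by ring, Complex.exp_sub]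
  field_simp

lemma lagrange_sum (n : ℕ) (β : Fin (n+1) → ℂ) (hβ : Function.Injective β)
    (r : ℕ) (hr : r ≤ n) (w : ℂ) :
    ∑ k, β k ^ r * ∏ j ∈ univ.erase k, ((w - β j) / (β k - β j)) = w ^ r := by
  have hd : ((Polynomial.X : Polynomial ℂ) ^ r).degree < ((univ : Finset (Fin (n+1))).card : ℕ) := by
    rw [Polynomial.degree_X_pow, card_univ, Fintype.card_fin]
    exact_mod_cast Nat.lt_succ_of_le hr
  have h := Lagrange.eq_interpolate (f := (Polynomial.X : Polynomial ℂ)^r) hβ.injOn hd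
  have h2 := congrArg (Polynomial.eval w) h
  simp only [Lagrange.interpolate_apply, Lagrange.basis, Lagrange.basisDivisor,
    Polynomial.eval_prod, Polynomial.eval_finset_sum, Polynomial.eval_mul, Polynomial.eval_C,
    Polynomial.eval_pow, Polynomial.eval_X, Polynomial.eval_sub] at h2
  rw [h2]
  refine Finset.sum_congr rfl fun k _ => ?_
  congr 1
  refine Finset.prod_congr rfl fun j _ => ?_
  rw [div_eq_mul_inv, mul_comm]

lemma key_alg (u c α L : ℂ) (hu : u ≠ 0) (hc : c ≠ 0) (hα : α ≠ 0) (m p s : ℕ) (ϑ : ℤ)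
    (hϑ : ϑ = (p:ℤ) + m - s) :
    (c^m/α * (u/c)^ϑ - α/c^m * (u/c)^(-ϑ))/(2*Complex.I) * ((c/u)^(p+s) * L)
      = α⁻¹ * u^(ϑ - ((p:ℤ)+s)) / (2*Complex.I) * ((c^2)^s * L)
        - α * u^(-ϑ - ((p:ℤ)+s)) / (2*Complex.I) * ((c^2)^p * L) := by
  have huc : u/c ≠ 0 := div_ne_zero hu hc
  have h1 : (u/c)^ϑ = (u^p/c^p) * (u^m/c^m) / (u^s/c^s) := by
    rw [hϑ, zpow_sub₀ huc, zpow_add₀ huc, zpow_natCast, zpow_natCast, zpow_natCast,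
      div_pow, div_pow, div_pow]
  have h2 : (u/c)^(-ϑ) = (u^s/c^s) / ((u^p/c^p) * (u^m/c^m)) := by
    rw [show -ϑ = (s:ℤ) - ((p:ℤ) + m) by omega, zpow_sub₀ huc, zpow_add₀ huc,
      zpow_natCast, zpow_natCast, zpow_natCast, div_pow, div_pow, div_pow]
  have h3 : u^(ϑ - ((p:ℤ)+s)) = u^m / (u^s * u^s) := by
    rw [show ϑ - ((p:ℤ)+s) = (m:ℤ) - ((s:ℤ) + s) by omega, zpow_sub₀ hu, zpow_add₀ hu,
      zpow_natCast, zpow_natCast]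
  have h4 : u^(-ϑ - ((p:ℤ)+s)) = (u^p * u^p * u^m)⁻¹ := by
    rw [show -ϑ - ((p:ℤ)+s) = -(((p:ℤ) + p) + m) by omega, zpow_neg, zpow_add₀ hu,
      zpow_add₀ hu, zpow_natCast, zpow_natCast]
  have h5 : ∀ x : ℂ, ∀ k : ℕ, (x^2)^k = x^k * x^k := fun x k => by
    rw [← pow_mul, two_mul, pow_add]
  have h6 : (c/u)^(p+s) = (c^p * c^s)/(u^p * u^s) := by rw [div_pow, pow_add, pow_add]
  rw [h1, h2, h3, h4, h5, h5, h6]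
  have hU1 : u^p ≠ 0 := pow_ne_zero _ hu
  have hU2 : u^m ≠ 0 := pow_ne_zero _ hu
  have hU3 : u^s ≠ 0 := pow_ne_zero _ hu
  have hC1 : c^p ≠ 0 := pow_ne_zero _ hc
  have hC2 : c^m ≠ 0 := pow_ne_zero _ hc
  have hC3 : c^s ≠ 0 := pow_ne_zero _ hc
  have hI : (Complex.I) ≠ 0 := Complex.I_ne_zero
  generalize u^p = U1 at hU1 ⊢
  generalize u^m = U2 at hU2 ⊢
  generalize u^s = U3 at hU3 ⊢
  generalize c^p = C1 at hC1 ⊢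
  generalize c^m = C2 at hC2 ⊢
  generalize c^s = C3 at hC3 ⊢
  field_simp

lemma sin_shift_exp (m : ℕ) (a : ℝ) (t : ℤ) (x y : ℂ) :
    Complex.sin ((m:ℂ)*y - a + t*(x - y)) =
      ((Complex.exp (y*Complex.I))^m / Complex.exp ((a:ℂ)*Complex.I)
          * (Complex.exp (x*Complex.I)/Complex.exp (y*Complex.I))^t
        - Complex.exp ((a:ℂ)*Complex.I) / (Complex.exp (y*Complex.I))^m
          * (Complex.exp (x*Complex.I)/Complex.exp (y*Complex.I))^(-t)) / (2*Complex.I) := by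
  rw [sin_eq_exp']
  congr 1
  rw [show ((m:ℂ)*y - a + t*(x - y))*Complex.I
      = ((m:ℂ)*(y*Complex.I) + (t:ℂ)*((x*Complex.I) - (y*Complex.I))) - (a:ℂ)*Complex.I by ring]
  rw [show -(((m:ℂ)*(y*Complex.I) + (t:ℂ)*((x*Complex.I) - (y*Complex.I))) - (a:ℂ)*Complex.I)
      = (a:ℂ)*Complex.I - ((m:ℂ)*(y*Complex.I) + (t:ℂ)*((x*Complex.I) - (y*Complex.I))) by ring]
  rw [Complex.exp_sub, Complex.exp_sub, Complex.exp_add, Complex.exp_nat_mul,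
    Complex.exp_int_mul, Complex.exp_sub, zpow_neg]
  have h1 : Complex.exp (x*Complex.I) ≠ 0 := Complex.exp_ne_zero _
  have h2 : Complex.exp (y*Complex.I) ≠ 0 := Complex.exp_ne_zero _
  have h3 : Complex.exp ((a:ℂ)*Complex.I) ≠ 0 := Complex.exp_ne_zero _
  have h4 : (Complex.exp (x*Complex.I)/Complex.exp (y*Complex.I))^t ≠ 0 :=
    zpow_ne_zero _ (div_ne_zero h1 h2)
  have h5 : (Complex.exp (y*Complex.I))^m ≠ 0 := pow_ne_zero _ h2
  field_simp

lemma sin_lin_exp (m : ℕ) (a : ℝ) (x : ℂ) :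
    Complex.sin ((m:ℂ)*x - a) =
      ((Complex.exp (x*Complex.I))^m / Complex.exp ((a:ℂ)*Complex.I)
        - Complex.exp ((a:ℂ)*Complex.I) / (Complex.exp (x*Complex.I))^m) / (2*Complex.I) := by
  rw [sin_eq_exp',
    show ((m:ℂ)*x - (a:ℂ))*Complex.I = (m:ℂ)*(x*Complex.I) - (a:ℂ)*Complex.I by ring,
    show -((m:ℂ)*(x*Complex.I) - (a:ℂ)*Complex.I) = (a:ℂ)*Complex.I - (m:ℂ)*(x*Complex.I) by ring,
    Complex.exp_sub, Complex.exp_sub, Complex.exp_nat_mul]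

theorem sin_over_sine_expansion (n : ℕ) (b : Fin (n + 1) → ℝ)
    (hb : ∀ j k, j ≠ k → Real.sin (b j - b k) ≠ 0)
    (m : ℕ) (a : ℝ) (ϑ : ℤ)
    (hϑl : (m : ℤ) - n ≤ ϑ) (hϑu : ϑ ≤ (m : ℤ) + n)
    (hpar : ϑ % 2 = ((m : ℤ) + n) % 2)
    (z : ℂ) (hz : ∀ k, Complex.sin (z - (b k : ℂ)) ≠ 0) :
    Complex.sin ((m : ℂ) * z - (a : ℂ)) / ∏ k, Complex.sin (z - (b k : ℂ))
      = ∑ k, Complex.sin ((m : ℂ) * (b k : ℂ) - (a : ℂ) + (ϑ : ℂ) * (z - (b k : ℂ))) /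
          ((∏ j ∈ univ.erase k, Complex.sin ((b k : ℂ) - (b j : ℂ))) *
            Complex.sin (z - (b k : ℂ))) := by
  obtain ⟨p, q, hpq, hq'⟩ : ∃ p q : ℕ, (p:ℤ)*2 = ϑ + n - m ∧ n = p + q :=
    ⟨((ϑ + ↑n - ↑m).toNat)/2, n - ((ϑ + ↑n - ↑m).toNat)/2, by omega, by omega⟩
  have hϑpq : ϑ = (p:ℤ) + m - q := by omega
  set u := Complex.exp (z*Complex.I) with hu_def
  have hu : u ≠ 0 := Complex.exp_ne_zero _
  set c : Fin (n+1) → ℂ := fun k => Complex.exp ((b k : ℂ)*Complex.I) with hc_def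
  have hc : ∀ k, c k ≠ 0 := fun k => Complex.exp_ne_zero _
  set α := Complex.exp ((a:ℂ)*Complex.I) with hα_def
  have hα : α ≠ 0 := Complex.exp_ne_zero _
  set β : Fin (n+1) → ℂ := fun k => (c k)^2 with hβ_def
  set w := u^2 with hw_def
  have hS : ∀ j, Complex.sin (z - (b j:ℂ)) = (w - β j) / (2*Complex.I*u*(c j)) :=
    fun j => sin_sub_exp z (b j)
  have hD : ∀ k j, Complex.sin ((b k:ℂ) - (b j:ℂ)) = (β k - β j) / (2*Complex.I*(c k)*(c j)) :=
    fun k j => sin_sub_exp _ _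
  have hsinD : ∀ k j, j ≠ k → Complex.sin ((b k:ℂ) - (b j:ℂ)) ≠ 0 := by
    intro k j hjk h
    have h0 : Real.sin (b k - b j) ≠ 0 := hb k j (fun h' => hjk h'.symm)
    apply h0
    have h1 : ((Real.sin (b k - b j) : ℝ) : ℂ) = 0 := by
      rw [Complex.ofReal_sin]; push_cast; exact h
    exact_mod_cast h1
  have hβne : ∀ k j, j ≠ k → β k - β j ≠ 0 := by
    intro k j hjk h
    apply hsinD k j hjk
    rw [hD k j, h, zero_div]
  have hβinj : Function.Injective β := by
    intro j k h
    by_contra hne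
    exact hβne k j hne (by rw [h, sub_self])
  have hN : ∀ k, Complex.sin ((m:ℂ)*(b k:ℂ) - (a:ℂ) + (ϑ:ℂ)*(z - (b k:ℂ)))
      = ((c k)^m/α * (u/(c k))^ϑ - α/(c k)^m * (u/(c k))^(-ϑ))/(2*Complex.I) :=
    fun k => sin_shift_exp m a ϑ z (b k)
  have t1 : ∀ k, (∏ j ∈ univ.erase k, Complex.sin (z - (b j:ℂ)))
        / (∏ j ∈ univ.erase k, Complex.sin ((b k:ℂ) - (b j:ℂ)))
      = (c k/u)^n * ∏ j ∈ univ.erase k, ((w - β j)/(β k - β j)) := by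
    intro k
    have e : ∀ j ∈ univ.erase k, Complex.sin (z - (b j:ℂ)) / Complex.sin ((b k:ℂ) - (b j:ℂ))
        = (c k/u) * ((w - β j)/(β k - β j)) := by
      intro j hj
      have hjk : j ≠ k := ne_of_mem_erase hj
      have hI : (Complex.I) ≠ 0 := Complex.I_ne_zero
      have hbkj := hβne k j hjk
      have hden : (2*Complex.I*u*(c j))/(2*Complex.I*(c k)*(c j)) = u / c k := by
        field_simp [hc j, hc k]
      rw [hS j, hD k j, div_div_div_comm, hden]
      rw [div_div_eq_mul_div, mul_comm ((w - β j)/(β k - β j)) (c k), mul_div_assoc]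
      ring
    rw [← Finset.prod_div_distrib, Finset.prod_congr rfl e, Finset.prod_mul_distrib,
      Finset.prod_const, card_erase_of_mem (mem_univ k), card_univ, Fintype.card_fin,
      Nat.add_sub_cancel]
  have star : Complex.sin ((m:ℂ)*z - (a:ℂ))
      = ∑ k, Complex.sin ((m:ℂ)*(b k:ℂ) - (a:ℂ) + (ϑ:ℂ)*(z - (b k:ℂ)))
          * ((∏ j ∈ univ.erase k, Complex.sin (z - (b j:ℂ)))
             / (∏ j ∈ univ.erase k, Complex.sin ((b k:ℂ) - (b j:ℂ)))) := by
    have key : ∀ k ∈ (univ : Finset (Fin (n+1))),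
        Complex.sin ((m:ℂ)*(b k:ℂ) - (a:ℂ) + (ϑ:ℂ)*(z - (b k:ℂ)))
          * ((∏ j ∈ univ.erase k, Complex.sin (z - (b j:ℂ)))
             / (∏ j ∈ univ.erase k, Complex.sin ((b k:ℂ) - (b j:ℂ))))
        = α⁻¹ * u^(ϑ - ((p:ℤ)+q)) / (2*Complex.I)
            * (β k^q * ∏ j ∈ univ.erase k, ((w - β j)/(β k - β j)))
          - α * u^(-ϑ - ((p:ℤ)+q)) / (2*Complex.I)
            * (β k^p * ∏ j ∈ univ.erase k, ((w - β j)/(β k - β j))) := by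
      intro k _
      rw [hN k, t1 k]
      have hk := key_alg u (c k) α (∏ j ∈ univ.erase k, ((w - β j)/(β k - β j)))
        hu (hc k) hα m p q ϑ hϑpq
      rw [show p + q = n from hq'.symm] at hk
      exact hk
    rw [Finset.sum_congr rfl key, Finset.sum_sub_distrib, ← Finset.mul_sum, ← Finset.mul_sum,
      lagrange_sum n β hβinj q (by omega) w, lagrange_sum n β hβinj p (by omega) w,
      sin_lin_exp m a z]
    rw [← hu_def, ← hα_def]
    have e3 : u^(ϑ - ((p:ℤ)+q)) = u^m / (u^q * u^q) := by
      rw [show ϑ - ((p:ℤ)+q) = (m:ℤ) - ((q:ℤ) + q) by omega, zpow_sub₀ hu, zpow_add₀ hu,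
        zpow_natCast, zpow_natCast]
    have e4 : u^(-ϑ - ((p:ℤ)+q)) = (u^p * u^p * u^m)⁻¹ := by
      rw [show -ϑ - ((p:ℤ)+q) = -(((p:ℤ) + p) + m) by omega, zpow_neg, zpow_add₀ hu,
        zpow_add₀ hu, zpow_natCast, zpow_natCast]
    have h5 : ∀ x : ℂ, ∀ k : ℕ, (x^2)^k = x^k * x^k := fun x k => by
      rw [← pow_mul, two_mul, pow_add]
    rw [e3, e4, hw_def, h5, h5]
    clear_value β w c α u
    have hU1 : u^p ≠ 0 := pow_ne_zero _ hu
    have hU2 : u^m ≠ 0 := pow_ne_zero _ hu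
    have hU3 : u^q ≠ 0 := pow_ne_zero _ hu
    generalize u^p = U1 at hU1 ⊢
    generalize u^m = U2 at hU2 ⊢
    generalize u^q = U3 at hU3 ⊢
    have hI : (Complex.I) ≠ 0 := Complex.I_ne_zero
    field_simp
  have hprodS : (∏ k, Complex.sin (z - (b k:ℂ))) ≠ 0 :=
    Finset.prod_ne_zero_iff.mpr (fun k _ => hz k)
  rw [star, Finset.sum_div]
  refine Finset.sum_congr rfl fun k _ => ?_
  have hPk : (∏ j ∈ univ.erase k, Complex.sin (z - (b j:ℂ))) ≠ 0 :=
    Finset.prod_ne_zero_iff.mpr fun j _ => hz j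
  have hDk : (∏ j ∈ univ.erase k, Complex.sin ((b k:ℂ) - (b j:ℂ))) ≠ 0 :=
    Finset.prod_ne_zero_iff.mpr fun j hj => hsinD k j (ne_of_mem_erase hj)
  have hSk : Complex.sin (z - (b k:ℂ)) ≠ 0 := hz k
  rw [show (∏ j, Complex.sin (z - (b j:ℂ)))
      = Complex.sin (z - (b k:ℂ)) * ∏ j ∈ univ.erase k, Complex.sin (z - (b j:ℂ))
    from (Finset.mul_prod_erase univ _ (mem_univ k)).symm]
  field_simp
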